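/- Fix continuous functions Λ, M : [0,∞) → [0,∞). For each integer k ≥ 1, let p^{(k)} = (p^{(k)}₀, …, p^{(k)}_k) be the solution of the absorbing forward system with k key nodes, rates Λ and M, and initial conditions p^{(k)}₀(0) = 1, p^{(k)}_j(0) = 0 for 1 ≤ j ≤ k. Then for every k ≥ 1 and every t ≥ 0, the absorption probabilities are monotone in k: p^{(k+1)}_{k+1}(t) ≤ p^{(k)}_k(t). Consequently ∫₀^∞ (1 − p^{(k)}_k(t)) dt ≤ ∫₀^∞ (1 − p^{(k+1)}_{k+1}(t)) dt, i.e. the expected activation time E[τ_k] is nondecreasing in k. -/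

import Mathlib

/-- The right-hand side of the absorbing forward system (system (3.3) of the paper) for
`k` key nodes, activation rate `Λ`, deactivation rate `M`, state probabilities `p`,
component `j`, at time `t`:
* `p_k' = Λ p_{k-1}` (absorbing state);
* for `0 ≤ j ≤ k-1`:
  `p_j' = (k-j+1) Λ p_{j-1} + (j+1) M p_{j+1} 𝟙{j+1 ≠ k} - ((k-j) Λ + j M) p_j`,
  with the convention `p_{-1} ≡ 0` (no inflow from `S_k` back to `S_{k-1}`).
This reproduces exactly the equations of Theorem 3.3: for `k ≥ 2`,
`p_0' = M p_1 - k Λ p_0`; for `k = 1`, `p_0' = -Λ p_0`; for `1 ≤ j ≤ k-2` the interior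
equation; and `p_{k-1}' = 2 Λ p_{k-2} - (Λ + (k-1) M) p_{k-1}` for `k ≥ 2`. -/
def forwardRate (k : ℕ) (Λ M : ℝ → ℝ) (p : ℕ → ℝ → ℝ) (j : ℕ) (t : ℝ) : ℝ :=
  if j = k then Λ t * p (k - 1) t
  else
    (if j = 0 then 0 else ((k : ℝ) - (j : ℝ) + 1) * Λ t * p (j - 1) t)
    + (if j + 1 = k then 0 else ((j : ℝ) + 1) * M t * p (j + 1) t)
    - (((k : ℝ) - (j : ℝ)) * Λ t + (j : ℝ) * M t) * p j t

/-- `p` is a solution of the absorbing forward system with `k` key nodes and rates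
`Λ, M`, with initial conditions `p_0(0) = 1` and `p_j(0) = 0` for `1 ≤ j ≤ k`. -/
def IsForwardSolution (k : ℕ) (Λ M : ℝ → ℝ) (p : ℕ → ℝ → ℝ) : Prop :=
  p 0 0 = 1 ∧ (∀ j, 1 ≤ j → j ≤ k → p j 0 = 0) ∧
  ∀ j ≤ k, ∀ t ≥ (0 : ℝ), HasDerivAt (p j) (forwardRate k Λ M p j t) t


open Set Filter

lemma sum_Icc_split (f : ℕ → ℝ) {j k : ℕ} (h : j ≤ k) :
    ∑ i ∈ Finset.Icc j k, f i = f j + ∑ i ∈ Finset.Icc (j+1) k, f i := by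
  rw [← Finset.add_sum_erase _ f (Finset.mem_Icc.2 ⟨le_refl j, h⟩), Finset.Icc_erase_left,
    ← Finset.Icc_add_one_left_eq_Ioc]

/-- Telescoping of the forward rates: the tail sums give boundary fluxes. -/
lemma sum_forwardRate_Icc (k : ℕ) (Λ M : ℝ → ℝ) (p : ℕ → ℝ → ℝ) (t : ℝ) :
    ∀ n j, 1 ≤ j → j + n = k →
    ∑ i ∈ Finset.Icc j k, forwardRate k Λ M p i t
      = ((k:ℝ) - (j:ℝ) + 1) * Λ t * p (j-1) t
        - (if j = k then 0 else (j:ℝ) * M t * p j t) := by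
  intro n
  induction n with
  | zero =>
    intro j hj1 hjk
    have hj : j = k := by omega
    subst hj
    rw [Finset.Icc_self, Finset.sum_singleton]
    simp [forwardRate]
  | succ n ih =>
    intro j hj1 hjk
    have hjlt : j < k := by omega
    rw [sum_Icc_split _ (le_of_lt hjlt), ih (j+1) (by omega) (by omega)]
    have hjne : j ≠ k := by omega
    have hjne0 : j ≠ 0 := by omega
    simp only [forwardRate, if_neg hjne, if_neg hjne0, Nat.add_sub_cancel]
    by_cases hj1k : j + 1 = k
    · simp only [if_pos hj1k, if_neg hjne]
      push_cast
      ring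
    · simp only [if_neg hj1k, if_neg hjne]
      push_cast
      ring

/-- Nonnegativity principle for quasimonotone (cooperative) ODE systems. -/
lemma quasimonotone_nonneg {n : ℕ} (x d : Fin n → ℝ → ℝ) (T K : ℝ)
    (hderiv : ∀ i, ∀ t ∈ Icc (0:ℝ) T, HasDerivAt (x i) (d i t) t)
    (h0 : ∀ i, 0 ≤ x i 0)
    (hq : ∀ t ∈ Icc (0:ℝ) T, ∀ i, ∀ c : ℝ, 0 < c → x i t = -c →
            (∀ j, -c ≤ x j t) → -(K * c) ≤ d i t) :
    ∀ t ∈ Icc (0:ℝ) T, ∀ i, 0 ≤ x i t := by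
  intro t ht i
  -- it suffices to prove a strict bound with an ε-barrier
  have main : ∀ ε > (0:ℝ), ∀ s ∈ Icc (0:ℝ) T, ∀ i, 0 < x i s + ε * Real.exp ((K+1)*s) := by
    intro ε hε
    set y : Fin n → ℝ → ℝ := fun i s => x i s + ε * Real.exp ((K+1)*s) with hy
    have hyderiv : ∀ i, ∀ s ∈ Icc (0:ℝ) T,
        HasDerivAt (y i) (d i s + ε * ((K+1) * Real.exp ((K+1)*s))) s := by
      intro i s hs
      have h1 : HasDerivAt (fun u : ℝ => (K+1)*u) (K+1) s := by
        simpa using (hasDerivAt_id s).const_mul (K+1)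
      have h2 : HasDerivAt (fun s : ℝ => ε * Real.exp ((K+1)*s))
          (ε * ((K+1) * Real.exp ((K+1)*s))) s := by
        have := (h1.exp).const_mul ε
        refine this.congr_deriv ?_
        ring
      exact (hderiv i s hs).add h2
    have hycont : ∀ i, ContinuousOn (y i) (Icc (0:ℝ) T) :=
      fun i s hs => ((hyderiv i s hs).continuousAt).continuousWithinAt
    by_contra hcon
    push_neg at hcon
    obtain ⟨s₀, hs₀, i₀, hi₀⟩ := hcon
    -- the bad set
    set B : Set ℝ := ⋃ i, (Icc (0:ℝ) T ∩ (y i) ⁻¹' (Iic 0)) with hB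
    have hBsub : B ⊆ Icc (0:ℝ) T := by
      intro s hs; simp only [hB, mem_iUnion, mem_inter_iff] at hs; exact hs.choose_spec.1
    have hBclosed : IsClosed B := by
      apply isClosed_iUnion_of_finite
      intro i
      exact (hycont i).preimage_isClosed_of_isClosed isClosed_Icc isClosed_Iic
    have hBne : B.Nonempty := ⟨s₀, mem_iUnion.2 ⟨i₀, ⟨hs₀, by simpa [hy] using hi₀⟩⟩⟩
    have hBbdd : BddBelow B := ⟨0, fun s hs => (hBsub hs).1⟩
    set t₀ := sInf B with ht₀
    have ht₀B : t₀ ∈ B := hBclosed.csInf_mem hBne hBbdd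
    obtain ⟨i₁, ht₀Icc, hyt₀⟩ : ∃ i, t₀ ∈ Icc (0:ℝ) T ∧ y i t₀ ≤ 0 := by
      simpa only [hB, mem_iUnion, mem_inter_iff, mem_preimage, mem_Iic] using ht₀B
    have hy0pos : ∀ i, 0 < y i 0 := by
      intro i
      have : (0:ℝ) < ε * Real.exp ((K+1)*0) := by positivity
      have := h0 i; simp only [hy]; linarith
    have ht₀pos : 0 < t₀ := by
      rcases lt_or_eq_of_le ht₀Icc.1 with h | h
      · exact h
      · exact absurd hyt₀ (not_le.2 (h ▸ hy0pos i₁))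
    -- y is positive strictly before t₀
    have hbefore : ∀ s, 0 ≤ s → s < t₀ → ∀ j, 0 < y j s := by
      intro s hs0 hst j
      by_contra hneg
      push_neg at hneg
      have : s ∈ B := mem_iUnion.2 ⟨j, ⟨⟨hs0, le_trans (le_of_lt hst) ht₀Icc.2⟩, hneg⟩⟩
      exact absurd (csInf_le hBbdd this) (not_le.2 hst)
    -- all coordinates are ≥ 0 at t₀ by left continuity
    have hge : ∀ j, 0 ≤ y j t₀ := by
      intro j
      have hcont : ContinuousAt (y j) t₀ := (hyderiv j t₀ ht₀Icc).continuousAt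
      have htend : Tendsto (y j) (nhdsWithin t₀ (Iio t₀)) (nhds (y j t₀)) :=
        hcont.continuousWithinAt.tendsto
      refine ge_of_tendsto htend ?_
      filter_upwards [Ioo_mem_nhdsLT_of_mem (⟨ht₀pos, le_refl t₀⟩ : t₀ ∈ Ioc 0 t₀)] with s hs
      exact le_of_lt (hbefore s (le_of_lt hs.1) hs.2 j)
    have hyi₁ : y i₁ t₀ = 0 := le_antisymm hyt₀ (hge i₁)
    -- apply the quasimonotonicity hypothesis at t₀
    set c : ℝ := ε * Real.exp ((K+1)*t₀) with hc
    have hcpos : 0 < c := by positivity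
    have hxi₁ : x i₁ t₀ = -c := by
      have := hyi₁; simp only [hy] at this; linarith
    have hall : ∀ j, -c ≤ x j t₀ := by
      intro j; have := hge j; simp only [hy] at this; linarith
    have hd := hq t₀ ht₀Icc i₁ c hcpos hxi₁ hall
    have hDpos : 0 < d i₁ t₀ + ε * ((K+1) * Real.exp ((K+1)*t₀)) := by
      have : ε * ((K+1) * Real.exp ((K+1)*t₀)) = (K+1) * c := by rw [hc]; ring
      rw [this]; nlinarith
    -- contradiction via the slope from the left
    have hslope := hasDerivAt_iff_tendsto_slope.1 (hyderiv i₁ t₀ ht₀Icc)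
    have hslope' : Tendsto (slope (y i₁) t₀) (nhdsWithin t₀ (Iio t₀))
        (nhds (d i₁ t₀ + ε * ((K+1) * Real.exp ((K+1)*t₀)))) :=
      hslope.mono_left (nhdsWithin_mono _ (fun s hs => ne_of_lt hs))
    have hle : d i₁ t₀ + ε * ((K+1) * Real.exp ((K+1)*t₀)) ≤ 0 := by
      refine le_of_tendsto hslope' ?_
      filter_upwards [Ioo_mem_nhdsLT_of_mem (⟨ht₀pos, le_refl t₀⟩ : t₀ ∈ Ioc 0 t₀)] with s hs
      have hypos := hbefore s (le_of_lt hs.1) hs.2 i₁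
      rw [slope_def_field, hyi₁]
      have hnum : y i₁ s - 0 ≥ 0 := by linarith
      have hden : s - t₀ < 0 := by linarith [hs.2]
      exact div_nonpos_of_nonneg_of_nonpos (by linarith) (le_of_lt hden)
    linarith
  -- take ε → 0
  by_contra hneg
  push_neg at hneg
  set E := Real.exp ((K+1)*t) with hE
  have hEpos : 0 < E := Real.exp_pos _
  have := main ((-x i t)/E) (div_pos (by linarith) hEpos) t ht i
  rw [div_mul_cancel₀] at this
  · linarith
  · exact ne_of_gt hEpos

lemma sum_forwardRate_tail (k : ℕ) (Λ M : ℝ → ℝ) (p : ℕ → ℝ → ℝ) (t : ℝ)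
    {j : ℕ} (hj1 : 1 ≤ j) (hjk : j ≤ k) :
    ∑ i ∈ Finset.Icc j k, forwardRate k Λ M p i t
      = ((k:ℝ) - (j:ℝ) + 1) * Λ t * p (j-1) t
        - (if j = k then 0 else (j:ℝ) * M t * p j t) :=
  sum_forwardRate_Icc k Λ M p t (k - j) j hj1 (by omega)

lemma sum_forwardRate_total (k : ℕ) (hk : 1 ≤ k) (Λ M : ℝ → ℝ) (p : ℕ → ℝ → ℝ) (t : ℝ) :
    ∑ i ∈ Finset.Icc 0 k, forwardRate k Λ M p i t = 0 := by
  rw [sum_Icc_split _ (by omega : 0 ≤ k), sum_forwardRate_tail k Λ M p t (le_refl 1) hk]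
  have h0k : (0:ℕ) ≠ k := by omega
  simp only [forwardRate, if_neg h0k, if_pos rfl, Nat.zero_add]
  by_cases h1k : (1:ℕ) = k
  · simp only [if_pos h1k]
    push_cast
    ring
  · simp only [if_neg h1k]
    push_cast
    ring

/-- Mass conservation: the total probability stays equal to `1`. -/
lemma forward_mass (k : ℕ) (hk : 1 ≤ k) (Λ M : ℝ → ℝ) (p : ℕ → ℝ → ℝ)
    (hp : IsForwardSolution k Λ M p) :
    ∀ t ≥ (0:ℝ), ∑ i ∈ Finset.Icc 0 k, p i t = 1 := by
  intro t ht
  set F : ℝ → ℝ := fun s => ∑ i ∈ Finset.Icc 0 k, p i s with hF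
  have hFd : ∀ s ∈ Set.Ico (0:ℝ) t, HasDerivWithinAt F 0 (Set.Ici s) s := by
    intro s hs
    have : HasDerivAt F (∑ i ∈ Finset.Icc 0 k, forwardRate k Λ M p i s) s :=
      HasDerivAt.fun_sum (fun i hi => hp.2.2 i (Finset.mem_Icc.1 hi).2 s hs.1)
    rw [sum_forwardRate_total k hk Λ M p s] at this
    exact this.hasDerivWithinAt
  have hFc : ContinuousOn F (Set.Icc 0 t) := by
    intro s hs
    have : HasDerivAt F (∑ i ∈ Finset.Icc 0 k, forwardRate k Λ M p i s) s :=
      HasDerivAt.fun_sum (fun i hi => hp.2.2 i (Finset.mem_Icc.1 hi).2 s hs.1)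
    exact this.continuousAt.continuousWithinAt
  have h1 : F t = F 0 := constant_of_has_deriv_right_zero hFc hFd t (Set.mem_Icc.2 ⟨ht, le_refl t⟩)
  have h2 : F 0 = 1 := by
    show (∑ i ∈ Finset.Icc 0 k, p i 0) = 1
    rw [sum_Icc_split _ (by omega : 0 ≤ k), hp.1,
      Finset.sum_eq_zero (fun i hi => hp.2.1 i (Finset.mem_Icc.1 hi).1 (Finset.mem_Icc.1 hi).2)]
    ring
  calc (∑ i ∈ Finset.Icc 0 k, p i t) = F t := rfl
    _ = 1 := by rw [h1, h2]

/-- Nonnegativity of the solution of the forward system. -/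
lemma forward_nonneg (k : ℕ) (hk : 1 ≤ k) (Λ M : ℝ → ℝ)
    (hΛc : ContinuousOn Λ (Set.Ici 0)) (hMc : ContinuousOn M (Set.Ici 0))
    (hΛnn : ∀ t ≥ (0 : ℝ), 0 ≤ Λ t) (hMnn : ∀ t ≥ (0 : ℝ), 0 ≤ M t)
    (p : ℕ → ℝ → ℝ) (hp : IsForwardSolution k Λ M p) :
    ∀ t ≥ (0:ℝ), ∀ j ≤ k, 0 ≤ p j t := by
  intro t ht j hj
  have hsub : Set.Icc (0:ℝ) t ⊆ Set.Ici 0 := fun s hs => hs.1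
  obtain ⟨CΛ, hCΛ⟩ := isCompact_Icc.exists_bound_of_continuousOn (hΛc.mono hsub)
  obtain ⟨CM, hCM⟩ := isCompact_Icc.exists_bound_of_continuousOn (hMc.mono hsub)
  have key := quasimonotone_nonneg (n := k+1) (fun i s => p i s)
      (fun i s => forwardRate k Λ M p i s) t (((k:ℝ)+1) * (CΛ + CM))
      (fun i s hs => hp.2.2 i (by omega : (i:ℕ) ≤ k) s hs.1)
      (fun i => ?_) (fun s hs i c hc hxi hall => ?_)
  · exact key t (Set.mem_Icc.2 ⟨ht, le_refl t⟩) ⟨j, by omega⟩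
  · -- initial conditions
    show 0 ≤ p (i:ℕ) 0
    rcases Nat.eq_zero_or_pos (i:ℕ) with h | h
    · rw [h, hp.1]; norm_num
    · rw [hp.2.1 i h (by omega)]
  · -- quasimonotonicity estimate
    show -((((k:ℝ)+1) * (CΛ + CM)) * c) ≤ forwardRate k Λ M p (i:ℕ) s
    have hΛs : 0 ≤ Λ s ∧ Λ s ≤ CΛ := ⟨hΛnn s hs.1, le_trans (le_abs_self _) (hCΛ s hs)⟩
    have hMs : 0 ≤ M s ∧ M s ≤ CM := ⟨hMnn s hs.1, le_trans (le_abs_self _) (hCM s hs)⟩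
    have hCΛ0 : 0 ≤ CΛ := le_trans hΛs.1 hΛs.2
    have hCM0 : 0 ≤ CM := le_trans hMs.1 hMs.2
    have hk1 : (0:ℝ) ≤ (k:ℝ) + 1 := by positivity
    have hik : (i:ℕ) ≤ k := by omega
    have hikr : ((i:ℕ):ℝ) ≤ (k:ℝ) := by exact_mod_cast hik
    have hir : (0:ℝ) ≤ ((i:ℕ):ℝ) := by positivity
    by_cases hiek : (i:ℕ) = k
    · simp only [forwardRate, if_pos hiek]
      have h1 : -c ≤ p (k-1) s := hall ⟨k-1, by omega⟩
      have e1 := mul_le_mul_of_nonneg_left h1 hΛs.1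
      have e2 := mul_le_mul_of_nonneg_right hΛs.2 hc.le
      nlinarith [mul_nonneg (mul_nonneg (by positivity : (0:ℝ) ≤ (k:ℝ)) (add_nonneg hCΛ0 hCM0)) hc.le,
        mul_nonneg hCM0 hc.le]
    · simp only [forwardRate, if_neg hiek]
      have hkr : (0:ℝ) ≤ (k:ℝ) - ((i:ℕ):ℝ) := by linarith
      have ht1 : -(((k:ℝ)+1) * CΛ * c) ≤
          (if (i:ℕ) = 0 then 0 else ((k:ℝ) - ((i:ℕ):ℝ) + 1) * Λ s * p ((i:ℕ)-1) s) := by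
        split_ifs with h0
        · nlinarith [mul_nonneg (mul_nonneg hk1 hCΛ0) hc.le]
        · have h1 : -c ≤ p ((i:ℕ)-1) s := hall ⟨(i:ℕ)-1, by omega⟩
          have h2 : (0:ℝ) ≤ (k:ℝ) - ((i:ℕ):ℝ) + 1 := by linarith
          have h3 : (k:ℝ) - ((i:ℕ):ℝ) + 1 ≤ (k:ℝ) + 1 := by linarith
          have e1 := mul_le_mul_of_nonneg_left h1 (mul_nonneg h2 hΛs.1)
          have e2 : ((k:ℝ) - ((i:ℕ):ℝ) + 1) * Λ s ≤ ((k:ℝ)+1) * CΛ :=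
            mul_le_mul h3 hΛs.2 hΛs.1 hk1
          have e3 := mul_le_mul_of_nonneg_right e2 hc.le
          nlinarith [e1, e3]
      have ht2 : -(((k:ℝ)+1) * CM * c) ≤
          (if (i:ℕ) + 1 = k then 0 else (((i:ℕ):ℝ) + 1) * M s * p ((i:ℕ)+1) s) := by
        split_ifs with h0
        · nlinarith [mul_nonneg (mul_nonneg hk1 hCM0) hc.le]
        · have h1 : -c ≤ p ((i:ℕ)+1) s := hall ⟨(i:ℕ)+1, by omega⟩
          have h2 : (0:ℝ) ≤ ((i:ℕ):ℝ) + 1 := by positivity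
          have h3 : ((i:ℕ):ℝ) + 1 ≤ (k:ℝ) + 1 := by linarith
          have e1 := mul_le_mul_of_nonneg_left h1 (mul_nonneg h2 hMs.1)
          have e2 : (((i:ℕ):ℝ) + 1) * M s ≤ ((k:ℝ)+1) * CM :=
            mul_le_mul h3 hMs.2 hMs.1 hk1
          have e3 := mul_le_mul_of_nonneg_right e2 hc.le
          nlinarith [e1, e3]
      have hxi' : p (i:ℕ) s = -c := hxi
      rw [hxi']
      have hE : 0 ≤ (((k:ℝ) - ((i:ℕ):ℝ)) * Λ s + ((i:ℕ):ℝ) * M s) * c :=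
        mul_nonneg (add_nonneg (mul_nonneg hkr hΛs.1) (mul_nonneg hir hMs.1)) hc.le
      nlinarith [ht1, ht2, hE]


/-- The key comparison: the tail masses of the `k+1`-system (shifted by one) are
dominated by those of the `k`-system. -/
lemma D_nonneg (k : ℕ) (hk : 1 ≤ k) (Λ M : ℝ → ℝ)
    (hΛc : ContinuousOn Λ (Set.Ici 0)) (hMc : ContinuousOn M (Set.Ici 0))
    (hΛnn : ∀ t ≥ (0 : ℝ), 0 ≤ Λ t) (hMnn : ∀ t ≥ (0 : ℝ), 0 ≤ M t)
    (pk pk1 : ℕ → ℝ → ℝ)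
    (hpk : IsForwardSolution k Λ M pk) (hpk1 : IsForwardSolution (k+1) Λ M pk1) :
    ∀ t ≥ (0:ℝ), ∀ j ≤ k,
      0 ≤ (∑ i ∈ Finset.Icc j k, pk i t) - ∑ i ∈ Finset.Icc (j+1) (k+1), pk1 i t := by
  have hnnk := forward_nonneg k hk Λ M hΛc hMc hΛnn hMnn pk hpk
  have hnnk1 := forward_nonneg (k+1) (by omega) Λ M hΛc hMc hΛnn hMnn pk1 hpk1
  have hmass := forward_mass k hk Λ M pk hpk
  have hmass1 := forward_mass (k+1) (by omega) Λ M pk1 hpk1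
  intro t ht j hj
  have key := quasimonotone_nonneg (n := k+1)
    (fun i s => (∑ i2 ∈ Finset.Icc (i:ℕ) k, pk i2 s)
      - ∑ i2 ∈ Finset.Icc ((i:ℕ)+1) (k+1), pk1 i2 s)
    (fun i s => (∑ i2 ∈ Finset.Icc (i:ℕ) k, forwardRate k Λ M pk i2 s)
      - ∑ i2 ∈ Finset.Icc ((i:ℕ)+1) (k+1), forwardRate (k+1) Λ M pk1 i2 s)
    t 0 ?_ ?_ ?_
  · exact key t (Set.mem_Icc.2 ⟨ht, le_refl t⟩) ⟨j, Nat.lt_succ_of_le hj⟩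
  · -- derivatives
    intro i s hs
    exact (HasDerivAt.fun_sum fun i2 hi2 => hpk.2.2 i2 (Finset.mem_Icc.1 hi2).2 s hs.1).sub
      (HasDerivAt.fun_sum fun i2 hi2 => hpk1.2.2 i2 (Finset.mem_Icc.1 hi2).2 s hs.1)
  · -- initial condition
    intro i
    show 0 ≤ (∑ i2 ∈ Finset.Icc (i:ℕ) k, pk i2 0)
      - ∑ i2 ∈ Finset.Icc ((i:ℕ)+1) (k+1), pk1 i2 0
    have hz : ∑ i2 ∈ Finset.Icc ((i:ℕ)+1) (k+1), pk1 i2 0 = 0 :=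
      Finset.sum_eq_zero fun m hm => by
        have h2 := Finset.mem_Icc.1 hm
        exact hpk1.2.1 m (by omega) (by omega)
    have hnn : 0 ≤ ∑ i2 ∈ Finset.Icc (i:ℕ) k, pk i2 0 := by
      refine Finset.sum_nonneg fun m hm => ?_
      rcases Nat.eq_zero_or_pos m with h | h
      · rw [h, hpk.1]; norm_num
      · rw [hpk.2.1 m h (Finset.mem_Icc.1 hm).2]
    linarith
  · -- quasimonotonicity
    rintro s hs ⟨m, hmlt⟩ c hc hxi hall
    show -(0*c) ≤ (∑ i2 ∈ Finset.Icc m k, forwardRate k Λ M pk i2 s)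
      - ∑ i2 ∈ Finset.Icc (m+1) (k+1), forwardRate (k+1) Λ M pk1 i2 s
    rw [zero_mul, neg_zero]
    have hmk : m ≤ k := by omega
    have hΛ := hΛnn s hs.1
    have hM := hMnn s hs.1
    have hxm : (∑ i2 ∈ Finset.Icc m k, pk i2 s)
        - ∑ i2 ∈ Finset.Icc (m+1) (k+1), pk1 i2 s = -c := hxi
    rcases Nat.eq_zero_or_pos m with hm0 | hm1
    · -- m = 0 : impossible, the difference is a probability
      exfalso
      subst hm0
      have h1 := hmass s hs.1
      have h2 := hmass1 s hs.1
      have h3 : (∑ i2 ∈ Finset.Icc 0 (k+1), pk1 i2 s)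
          = pk1 0 s + ∑ i2 ∈ Finset.Icc 1 (k+1), pk1 i2 s :=
        sum_Icc_split _ (by omega)
      have h4 : 0 ≤ pk1 0 s := hnnk1 s hs.1 0 (by omega)
      rw [h1] at hxm
      linarith
    rcases eq_or_lt_of_le hmk with hmk' | hmlt2
    · -- m = k : boundary row
      subst hmk'
      rw [Finset.Icc_self, Finset.sum_singleton, Finset.Icc_self, Finset.sum_singleton] at hxm
      have hprev : -c ≤ (∑ i2 ∈ Finset.Icc (m-1) m, pk i2 s)
          - ∑ i2 ∈ Finset.Icc ((m-1)+1) (m+1), pk1 i2 s := hall ⟨m-1, by omega⟩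
      rw [show m-1+1 = m from by omega,
        sum_Icc_split (fun i2 => pk i2 s) (show m-1 ≤ m from by omega),
        show m-1+1 = m from by omega, Finset.Icc_self, Finset.sum_singleton,
        sum_Icc_split (fun i2 => pk1 i2 s) (show m ≤ m+1 from by omega),
        Finset.Icc_self, Finset.sum_singleton] at hprev
      have hdiff : 0 ≤ pk (m-1) s - pk1 m s := by linarith
      rw [sum_forwardRate_tail m Λ M pk s hk (le_refl m),
        sum_forwardRate_tail (m+1) Λ M pk1 s (by omega) (le_refl (m+1))]
      simp only [if_pos rfl, Nat.add_sub_cancel]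
      push_cast
      nlinarith [mul_nonneg hΛ hdiff]
    · -- 1 ≤ m < k : interior row
      have hprev : -c ≤ (∑ i2 ∈ Finset.Icc (m-1) k, pk i2 s)
          - ∑ i2 ∈ Finset.Icc ((m-1)+1) (k+1), pk1 i2 s := hall ⟨m-1, by omega⟩
      have hnext : -c ≤ (∑ i2 ∈ Finset.Icc (m+1) k, pk i2 s)
          - ∑ i2 ∈ Finset.Icc ((m+1)+1) (k+1), pk1 i2 s := hall ⟨m+1, by omega⟩
      rw [show m-1+1 = m from by omega,
        sum_Icc_split (fun i2 => pk i2 s) (show m-1 ≤ k from by omega),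
        show m-1+1 = m from by omega,
        sum_Icc_split (fun i2 => pk1 i2 s) (show m ≤ k+1 from by omega)] at hprev
      have hxm2 := hxm
      rw [sum_Icc_split (fun i2 => pk i2 s) hmk,
        sum_Icc_split (fun i2 => pk1 i2 s) (show m+1 ≤ k+1 from by omega)] at hxm2
      have hd1 : 0 ≤ pk (m-1) s - pk1 m s := by linarith
      have hd2 : 0 ≤ pk1 (m+1) s - pk m s := by linarith
      have hPm : 0 ≤ pk m s := hnnk s hs.1 m hmk
      have hmr : ((m:ℕ):ℝ) ≤ (k:ℝ) := by exact_mod_cast hmk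
      have hc1 : (0:ℝ) ≤ (k:ℝ) - (m:ℝ) + 1 := by linarith
      rw [sum_forwardRate_tail k Λ M pk s hm1 hmk,
        sum_forwardRate_tail (k+1) Λ M pk1 s (by omega) (by omega)]
      simp only [if_neg (show m ≠ k from by omega),
        if_neg (show m+1 ≠ k+1 from by omega), Nat.add_sub_cancel]
      push_cast
      nlinarith [mul_nonneg (mul_nonneg hc1 hΛ) hd1, mul_nonneg hM hPm,
        mul_nonneg (mul_nonneg (show (0:ℝ) ≤ (m:ℝ)+1 from by positivity) hM) hd2]


/-- Fix continuous nonnegative rates `Λ, M` on `[0,∞)` and, for each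
`k ≥ 1`, let `P k` be the solution of the absorbing forward system with `k` key nodes.
Then for every `k ≥ 1` and every `t ≥ 0` the absorption probabilities are monotone in
`k`: `p^{(k+1)}_{k+1}(t) ≤ p^{(k)}_k(t)`; consequently
`∫₀^∞ (1 - p^{(k)}_k(t)) dt ≤ ∫₀^∞ (1 - p^{(k+1)}_{k+1}(t)) dt` (in `[0,∞]`), i.e.
the expected activation time `E[τ_k]` is nondecreasing in `k`. -/
theorem absorption_probability_monotone_in_k
    (Λ M : ℝ → ℝ)
    (hΛc : ContinuousOn Λ (Set.Ici 0)) (hMc : ContinuousOn M (Set.Ici 0))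
    (hΛnn : ∀ t ≥ (0 : ℝ), 0 ≤ Λ t) (hMnn : ∀ t ≥ (0 : ℝ), 0 ≤ M t)
    (P : ℕ → ℕ → ℝ → ℝ)
    (hP : ∀ k, 1 ≤ k → IsForwardSolution k Λ M (P k)) :
    ∀ k, 1 ≤ k →
      (∀ t ≥ (0 : ℝ), P (k + 1) (k + 1) t ≤ P k k t) ∧
      (∫⁻ t in Set.Ici (0 : ℝ), ENNReal.ofReal (1 - P k k t))
        ≤ ∫⁻ t in Set.Ici (0 : ℝ), ENNReal.ofReal (1 - P (k + 1) (k + 1) t) := by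
  intro k hk
  have hD := D_nonneg k hk Λ M hΛc hMc hΛnn hMnn (P k) (P (k+1)) (hP k hk) (hP (k+1) (by omega))
  have hmono : ∀ t ≥ (0:ℝ), P (k + 1) (k + 1) t ≤ P k k t := by
    intro t ht
    have := hD t ht k (le_refl k)
    rw [Finset.Icc_self, Finset.sum_singleton, Finset.Icc_self, Finset.sum_singleton] at this
    linarith
  refine ⟨hmono, ?_⟩
  refine MeasureTheory.lintegral_mono_ae ?_
  rw [MeasureTheory.ae_restrict_iff' measurableSet_Ici]
  refine MeasureTheory.ae_of_all _ (fun t ht => ?_)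
  exact ENNReal.ofReal_le_ofReal (by linarith [hmono t ht])
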